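/- arXiv:2006.09600 — 2 statements merged into one kernel-verified Lean document; each statement's English description precedes it below -/
import Mathlib

section
/- For two Hermitian matrices A, B and a density matrix ρ: I_ρ(A) + I_ρ(B) ≥ (1/2) I_ρ(A+B) + (1/4) I_ρ(A−B) ≥ (1/2) I_ρ(A+B). -/
open Matrix Finset
open scoped ComplexOrder

/-- The positive semidefinite square root (definition of the older Mathlib, since removed). -/
noncomputable def Matrix.PosSemidef.sqrt {n : Type*} [Fintype n] [DecidableEq n] {A : Matrix n n ℂ}
    (hA : A.PosSemidef) : Matrix n n ℂ :=
  hA.1.eigenvectorUnitary.1 * diagonal ((↑) ∘ (√·) ∘ hA.1.eigenvalues) *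
    (star hA.1.eigenvectorUnitary : Matrix n n ℂ)

/-- Wigner–Yanase skew information `I_ρ(H) = (1/2)‖[√ρ, H]‖²` (Frobenius norm). -/
noncomputable def skewInfoR {d : ℕ} {ρ : Matrix (Fin d) (Fin d) ℂ}
    (hρ : ρ.PosSemidef) (H : Matrix (Fin d) (Fin d) ℂ) : ℝ :=
  1 / 2 * ∑ i, ∑ j, ‖(hρ.sqrt * H - H * hρ.sqrt) i j‖ ^ 2

theorem skewInfo_two_obs_uncertainty {d : ℕ} (ρ A B : Matrix (Fin d) (Fin d) ℂ)
    (hρ : ρ.PosSemidef) (hτ : ρ.trace = 1)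
    (hA : A.IsHermitian) (hB : B.IsHermitian) :
    skewInfoR hρ A + skewInfoR hρ B ≥
        (1 / 2) * skewInfoR hρ (A + B) + (1 / 4) * skewInfoR hρ (A - B) ∧
      (1 / 2) * skewInfoR hρ (A + B) + (1 / 4) * skewInfoR hρ (A - B) ≥
        (1 / 2) * skewInfoR hρ (A + B) := by
  set s := hρ.sqrt with hs
  have hnonneg : ∀ H : Matrix (Fin d) (Fin d) ℂ, 0 ≤ skewInfoR hρ H := by
    intro H
    unfold skewInfoR
    positivity
  have hpar : skewInfoR hρ (A + B) + skewInfoR hρ (A - B)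
      = 2 * skewInfoR hρ A + 2 * skewInfoR hρ B := by
    unfold skewInfoR
    have h1 : s * (A + B) - (A + B) * s = (s * A - A * s) + (s * B - B * s) := by
      noncomm_ring
    have h2 : s * (A - B) - (A - B) * s = (s * A - A * s) - (s * B - B * s) := by
      noncomm_ring
    rw [h1, h2]
    set X := s * A - A * s with hX
    set Y := s * B - B * s with hY
    have e : ∀ i j : Fin d, ‖(X + Y) i j‖ ^ 2 + ‖(X - Y) i j‖ ^ 2
        = 2 * ‖X i j‖ ^ 2 + 2 * ‖Y i j‖ ^ 2 := by
      intro i j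
      have hp := parallelogram_law_with_norm ℝ (X i j) (Y i j)
      simp only [Matrix.add_apply, Matrix.sub_apply, pow_two]
      linarith [hp]
    have key : (∑ i, ∑ j, ‖(X + Y) i j‖ ^ 2) + (∑ i, ∑ j, ‖(X - Y) i j‖ ^ 2)
        = 2 * (∑ i, ∑ j, ‖X i j‖ ^ 2) + 2 * (∑ i, ∑ j, ‖Y i j‖ ^ 2) := by
      rw [Finset.mul_sum, Finset.mul_sum, ← Finset.sum_add_distrib,
        ← Finset.sum_add_distrib]
      refine Finset.sum_congr rfl fun i _ => ?_
      rw [Finset.mul_sum, Finset.mul_sum, ← Finset.sum_add_distrib,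
        ← Finset.sum_add_distrib]
      exact Finset.sum_congr rfl fun j _ => e i j
    linarith [key]
  constructor
  · nlinarith [hnonneg (A - B), hpar]
  · nlinarith [hnonneg (A - B)]
end

section
/- Let U, V be elements of a complex inner product space and let 1 < p ≤ 2, q with 1/p + 1/q = 1. Then ‖U − V‖² + ‖(1−p)U − V‖² ≤ p‖U‖² + q‖V‖² ≤ ‖U − V‖² + ‖U − (1−q)V‖² (Bohr's inequality). -/
lemma bohr_aux (p q a b c : ℝ) (hq2 : 2 ≤ q) (hpq'' : p * q = p + q)
    (h1 : 0 ≤ (p-1)^2 * a + 2 * (p-1) * c + b)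
    (h2 : 0 ≤ a + (q-1)^2 * b + 2 * (q-1) * c) :
    ((a - 2*c + b) + ((1-p)^2 * a - 2*(1-p)*c + b) ≤ p * a + q * b) ∧
      (p * a + q * b ≤ (a - 2*c + b) + (a - 2*(1-q)*c + (1-q)^2 * b)) := by
  have key1 : p * a + q * b - ((a - 2*c + b) + ((1-p)^2 * a - 2*(1-p)*c + b))
      = (q - 2) * ((p-1)^2 * a + 2*(p-1)*c + b) := by
    linear_combination ((1-p)*a - 2*c) * hpq''
  have key2 : (q - 1) * ((a - 2*c + b) + (a - 2*(1-q)*c + (1-q)^2 * b) - (p*a + q*b))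
      = (q - 2) * (a + (q-1)^2 * b + 2*(q-1)*c) := by
    linear_combination (-a) * hpq''
  constructor
  · nlinarith [mul_nonneg (by linarith : (0:ℝ) ≤ q - 2) h1, key1]
  · have hX : (0:ℝ) ≤ (q - 1) *
        ((a - 2*c + b) + (a - 2*(1-q)*c + (1-q)^2 * b) - (p*a + q*b)) := by
      rw [key2]; exact mul_nonneg (by linarith) h2
    nlinarith [hX]

theorem bohr_inequality {H : Type*} [NormedAddCommGroup H] [InnerProductSpace ℂ H]
    (U V : H) (p q : ℝ) (hp1 : 1 < p) (hp2 : p ≤ 2) (hpq : 1 / p + 1 / q = 1) :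
    ‖U - V‖ ^ 2 + ‖((1 - p : ℝ) : ℂ) • U - V‖ ^ 2 ≤ p * ‖U‖ ^ 2 + q * ‖V‖ ^ 2 ∧
      p * ‖U‖ ^ 2 + q * ‖V‖ ^ 2 ≤ ‖U - V‖ ^ 2 + ‖U - ((1 - q : ℝ) : ℂ) • V‖ ^ 2 := by
  have hp0 : (0:ℝ) < p := by linarith
  have hp1' : (0:ℝ) < p - 1 := by linarith
  have h1q : 1 / q = (p - 1) / p := by
    have : 1 / q = 1 - 1 / p := by linarith
    rw [this]; field_simp
  have hq0 : q ≠ 0 := by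
    intro h
    rw [h, div_zero] at h1q
    have := div_pos hp1' hp0
    linarith
  have hpq'' : p * q = p + q := by
    field_simp at hpq
    linarith
  have hq2 : (2:ℝ) ≤ q := by nlinarith [hpq'']
  set a := ‖U‖ ^ 2 with ha
  set b := ‖V‖ ^ 2 with hb
  set c : ℝ := (inner ℂ U V : ℂ).re with hc
  have eU : ‖U - V‖ ^ 2 = a - 2 * c + b := by
    rw [@norm_sub_sq ℂ]; simp [ha, hb, hc]
  have e2 : ‖((1 - p : ℝ) : ℂ) • U - V‖ ^ 2 = (1-p)^2 * a - 2 * (1-p) * c + b := by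
    have habs : ‖(1 - (p:ℂ))‖ ^ 2 = (1-p)^2 := by
      rw [← Complex.ofReal_one, ← Complex.ofReal_sub, Complex.norm_real, Real.norm_eq_abs, sq_abs]
    rw [@norm_sub_sq ℂ]
    simp [inner_smul_left, norm_smul, Complex.conj_ofReal, ha, hb, hc]
    linear_combination ‖U‖^2 * habs
  have e3 : ‖U - ((1 - q : ℝ) : ℂ) • V‖ ^ 2 = a - 2 * (1-q) * c + (1-q)^2 * b := by
    have habs : ‖(1 - (q:ℂ))‖ ^ 2 = (1-q)^2 := by
      rw [← Complex.ofReal_one, ← Complex.ofReal_sub, Complex.norm_real, Real.norm_eq_abs, sq_abs]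
    rw [@norm_sub_sq ℂ]
    simp [inner_smul_right, norm_smul, ha, hb, hc]
    linear_combination ‖V‖^2 * habs
  have h1 : (0:ℝ) ≤ (p-1)^2 * a + 2 * (p-1) * c + b := by
    have habs : ‖((p:ℂ) - 1)‖ ^ 2 = (p-1)^2 := by
      rw [← Complex.ofReal_one, ← Complex.ofReal_sub, Complex.norm_real, Real.norm_eq_abs, sq_abs]
    have h := sq_nonneg ‖((p-1:ℝ):ℂ) • U + V‖
    rw [@norm_add_sq ℂ] at h
    simp [inner_smul_left, norm_smul, Complex.conj_ofReal, ha, hb, hc] at h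
    nlinarith [h, habs]
  have h2 : (0:ℝ) ≤ a + (q-1)^2 * b + 2 * (q-1) * c := by
    have habs : ‖((q:ℂ) - 1)‖ ^ 2 = (q-1)^2 := by
      rw [← Complex.ofReal_one, ← Complex.ofReal_sub, Complex.norm_real, Real.norm_eq_abs, sq_abs]
    have h := sq_nonneg ‖U + ((q-1:ℝ):ℂ) • V‖
    rw [@norm_add_sq ℂ] at h
    simp [inner_smul_right, norm_smul, ha, hb, hc] at h
    nlinarith [h, habs]
  obtain ⟨k1, k2⟩ := bohr_aux p q a b c hq2 hpq'' h1 h2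
  constructor
  · rw [eU, e2]; exact k1
  · rw [eU, e3]; exact k2
end
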